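/- For every integer p ≥ 1 and all 0 ≤ m ≤ n: S^p_{n,m} = (1/m!)·Σ_{k=0}^m C(m,k)·(−1)^{m−k}·B_n^{p−1}(k). (For p = 1 this reduces to the classical formula S(n,m) = (1/m!)·Σ_{k=0}^m C(m,k)(−1)^{m−k} k^n, since B_n^0(k) = k^n.) -/

import Mathlib

open Finset

/-- Stirling numbers of the second kind. -/
def S2 : ℕ → ℕ → ℕ
  | 0, 0 => 1
  | 0, _ + 1 => 0
  | _ + 1, 0 => 0
  | n + 1, m + 1 => (m + 1) * S2 n (m + 1) + S2 n m

/-- Entries `S^p_{n,m}` of the `p`-th power of the Stirling matrix (for `p ≥ 1`;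
the value at `p = 0` is junk). -/
def Sp : ℕ → ℕ → ℕ → ℕ
  | 0, _, _ => 0
  | 1, n, m => S2 n m
  | p + 2, n, m => ∑ k ∈ Finset.range (n + 1), S2 n k * Sp (p + 1) k m

/-- Higher order Bell polynomials: `B_n^0(x) = x^n`, `B_n^p(x) = ∑_{m=0}^n S^p_{n,m} x^m`. -/
noncomputable def BellP : ℕ → ℕ → ℝ → ℝ
  | 0, n, x => x ^ n
  | p + 1, n, x => ∑ m ∈ Finset.range (n + 1), (Sp (p + 1) n m : ℝ) * x ^ m

lemma S2_eq_zero : ∀ {n m : ℕ}, n < m → S2 n m = 0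
  | 0, _ + 1, _ => rfl
  | n + 1, m + 1, h => by
    have h1 : n < m + 1 := by omega
    have h2 : n < m := by omega
    simp [S2, S2_eq_zero h1, S2_eq_zero h2]

lemma Sp_eq_zero : ∀ (p : ℕ) {n m : ℕ}, n < m → Sp (p + 1) n m = 0
  | 0, n, m, h => S2_eq_zero h
  | p + 1, n, m, h => by
    show (∑ k ∈ range (n + 1), S2 n k * Sp (p + 1) k m) = 0
    refine Finset.sum_eq_zero fun k hk => ?_
    simp only [mem_range] at hk
    rw [Sp_eq_zero p (by omega : k < m), mul_zero]

lemma truncate (q n m N : ℕ) (hN : n + 1 ≤ N) :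
    ∑ k ∈ range N, S2 n k * Sp (q + 1) k m = ∑ k ∈ range (n + 1), S2 n k * Sp (q + 1) k m := by
  rw [← Finset.sum_subset (Finset.range_subset_range.2 hN)]
  intro k _ hk
  simp only [mem_range, not_lt] at hk
  rw [S2_eq_zero (by omega), zero_mul]

lemma truncate' (q n m N : ℕ) (hN : n + 1 ≤ N) :
    ∑ k ∈ range N, Sp (q + 1) n k * S2 k m = ∑ k ∈ range (n + 1), Sp (q + 1) n k * S2 k m := by
  rw [← Finset.sum_subset (Finset.range_subset_range.2 hN)]
  intro k _ hk
  simp only [mem_range, not_lt] at hk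
  rw [Sp_eq_zero q (by omega), zero_mul]

/-- The Stirling matrix commutes with its powers. -/
lemma comm_lemma : ∀ (q n m : ℕ),
    ∑ k ∈ range (n + 1), S2 n k * Sp (q + 1) k m
      = ∑ k ∈ range (n + 1), Sp (q + 1) n k * S2 k m
  | 0, n, m => rfl
  | q + 1, n, m => by
    have hdef : ∀ a b, Sp (q + 2) a b = ∑ k ∈ range (a + 1), S2 a k * Sp (q + 1) k b :=
      fun a b => rfl
    have lhs_eq : ∑ k ∈ range (n + 1), S2 n k * Sp (q + 2) k m
        = ∑ k ∈ range (n + 1), ∑ j ∈ range (n + 1), S2 n k * (S2 k j * Sp (q + 1) j m) := by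
      refine Finset.sum_congr rfl fun k hk => ?_
      simp only [mem_range] at hk
      rw [hdef, ← truncate q k m (n + 1) (by omega), Finset.mul_sum]
    have rhs_eq : ∑ k ∈ range (n + 1), Sp (q + 2) n k * S2 k m
        = ∑ k ∈ range (n + 1), ∑ j ∈ range (n + 1), S2 n k * (S2 k j * Sp (q + 1) j m) := by
      calc ∑ k ∈ range (n + 1), Sp (q + 2) n k * S2 k m
          = ∑ k ∈ range (n + 1), ∑ j ∈ range (n + 1), S2 n j * Sp (q + 1) j k * S2 k m := by
            refine Finset.sum_congr rfl fun k hk => ?_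
            rw [hdef, Finset.sum_mul]
        _ = ∑ j ∈ range (n + 1), ∑ k ∈ range (n + 1), S2 n j * Sp (q + 1) j k * S2 k m :=
            Finset.sum_comm
        _ = ∑ j ∈ range (n + 1), S2 n j * ∑ k ∈ range (n + 1), Sp (q + 1) j k * S2 k m := by
            refine Finset.sum_congr rfl fun j hj => ?_
            rw [Finset.mul_sum]
            exact Finset.sum_congr rfl fun k _ => by ring
        _ = ∑ j ∈ range (n + 1), ∑ k ∈ range (n + 1), S2 n j * (S2 j k * Sp (q + 1) k m) := by
            refine Finset.sum_congr rfl fun j hj => ?_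
            simp only [mem_range] at hj
            rw [truncate' q j m (n + 1) (by omega), ← comm_lemma q j m,
              ← truncate q j m (n + 1) (by omega), Finset.mul_sum]
    rw [lhs_eq, rhs_eq]

/-- The classical alternating-sum formula for Stirling numbers of the second kind. -/
lemma classical_id : ∀ (j m : ℕ),
    ((m.factorial : ℝ)) * S2 j m
      = ∑ k ∈ range (m + 1), (m.choose k : ℝ) * (-1 : ℝ) ^ (m - k) * (k : ℝ) ^ j
  | 0, 0 => by simp [S2]
  | 0, m + 1 => by
    have h : ∑ k ∈ range (m + 2), ((m+1).choose k : ℝ) * (-1 : ℝ) ^ (m + 1 - k) * (k:ℝ) ^ 0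
        = ((1 : ℝ) + (-1)) ^ (m + 1) := by
      rw [add_pow]
      refine Finset.sum_congr rfl fun k hk => ?_
      ring
    simp only [h]
    simp [S2]
  | j + 1, 0 => by simp [S2]
  | j + 1, m + 1 => by
    have key : ∑ k ∈ range (m + 2), ((m+1).choose k : ℝ) * (-1:ℝ)^(m+1-k) * (k:ℝ)^(j+1)
        = (m+1 : ℝ) *
          ((∑ k ∈ range (m + 2), ((m+1).choose k : ℝ) * (-1:ℝ)^(m+1-k) * (k:ℝ)^j)
           + ∑ k ∈ range (m + 1), (m.choose k : ℝ) * (-1:ℝ)^(m-k) * (k:ℝ)^j) := by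
      rw [Finset.sum_range_succ']
      push_cast
      have e1 : ∀ i ∈ range (m+1),
          ((m+1).choose (i+1) : ℝ) * (-1:ℝ)^(m-i) * ((i:ℝ)+1)^(j+1)
          = (m+1 : ℝ) * ((m.choose i : ℝ) * (-1:ℝ)^(m-i) * ((i:ℝ)+1)^j) := by
        intro i hi
        have hc : ((m+1).choose (i+1) : ℝ) * ((i:ℝ)+1) = (m+1 : ℝ) * (m.choose i : ℝ) := by
          have h' := congrArg (fun t : ℕ => (t : ℝ)) (Nat.add_one_mul_choose_eq m i)
          push_cast at h'
          linarith
        rw [pow_succ]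
        calc ((m+1).choose (i+1) : ℝ) * (-1:ℝ)^(m-i) * (((i:ℝ)+1)^j * ((i:ℝ)+1))
            = (((m+1).choose (i+1) : ℝ) * ((i:ℝ)+1)) * ((-1:ℝ)^(m-i) * ((i:ℝ)+1)^j) := by ring
          _ = (m+1 : ℝ) * ((m.choose i : ℝ) * (-1:ℝ)^(m-i) * ((i:ℝ)+1)^j) := by rw [hc]; ring
      rw [Finset.sum_congr rfl e1]
      rw [← Finset.mul_sum]
      rw [zero_pow (by omega : j + 1 ≠ 0)]
      rw [mul_zero, add_zero]
      congr 1
      rw [Finset.sum_range_succ' (fun k => ((m+1).choose k : ℝ) * (-1:ℝ)^(m+1-k) * (k:ℝ)^j)]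
      push_cast
      have e2 : ∀ i ∈ range (m+1),
          ((m+1).choose (i+1) : ℝ) * (-1:ℝ)^(m-i) * ((i:ℝ)+1)^j
          = (m.choose i : ℝ) * (-1:ℝ)^(m-i) * ((i:ℝ)+1)^j
            + (m.choose (i+1) : ℝ) * (-1:ℝ)^(m-i) * ((i:ℝ)+1)^j := by
        intro i hi
        rw [Nat.choose_succ_succ]
        push_cast
        ring
      rw [Finset.sum_congr rfl e2, Finset.sum_add_distrib]
      have e3 : ∑ i ∈ range (m+1), (m.choose (i+1) : ℝ) * (-1:ℝ)^(m-i) * ((i:ℝ)+1)^j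
          = -(∑ k ∈ range (m+1), (m.choose k : ℝ) * (-1:ℝ)^(m-k) * (k:ℝ)^j)
            + (-1:ℝ)^m * (0:ℝ)^j := by
        rw [Finset.sum_range_succ]
        simp only [Nat.choose_succ_self, Nat.cast_zero, zero_mul, add_zero]
        rw [Finset.sum_range_succ' (fun k => (m.choose k : ℝ) * (-1:ℝ)^(m-k) * (k:ℝ)^j)]
        push_cast
        have e4 : ∀ i ∈ range m,
            (m.choose (i+1) : ℝ) * (-1:ℝ)^(m-i) * ((i:ℝ)+1)^j
            = -((m.choose (i+1) : ℝ) * (-1:ℝ)^(m-(i+1)) * ((i:ℝ)+1)^j) := by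
          intro i hi
          simp only [mem_range] at hi
          have hms : m - i = (m - (i+1)) + 1 := by omega
          rw [hms, pow_succ]
          ring
        rw [Finset.sum_congr rfl e4, Finset.sum_neg_distrib]
        simp only [Nat.choose_zero_right, Nat.cast_one, one_mul, Nat.sub_zero]
        ring
      rw [e3]
      simp only [Nat.choose_zero_right, Nat.cast_one, one_mul, Nat.sub_zero]
      have hps : (-1:ℝ)^(m+1) = -(-1:ℝ)^m := by rw [pow_succ]; ring
      rw [hps]
      ring
    rw [key]
    have ih1 := classical_id j (m+1)
    have ih2 := classical_id j m
    rw [← ih1, ← ih2]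
    show ((m+1).factorial : ℝ) * (↑(S2 (j+1) (m+1)) : ℝ) = _
    rw [show S2 (j+1) (m+1) = (m+1) * S2 j (m+1) + S2 j m from rfl]
    rw [Nat.factorial_succ]
    push_cast
    ring

/-- `S^p_{n,m} = (1/m!) ∑_{k=0}^m C(m,k) (-1)^{m-k} B_n^{p-1}(k)`. -/
theorem stirling_power_eq_bell_sum (p n m : ℕ) (hp : 1 ≤ p) (hm : m ≤ n) :
    (Sp p n m : ℝ) =
      (1 / m.factorial) *
        ∑ k ∈ Finset.range (m + 1),
          (m.choose k : ℝ) * (-1 : ℝ) ^ (m - k) * BellP (p - 1) n (k : ℝ) := by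
  have hfac : (m.factorial : ℝ) ≠ 0 := Nat.cast_ne_zero.2 m.factorial_ne_zero
  match p, hp with
  | 1, _ =>
    show (S2 n m : ℝ) = (1 / m.factorial) * ∑ k ∈ range (m + 1),
        (m.choose k : ℝ) * (-1 : ℝ) ^ (m - k) * BellP 0 n (k : ℝ)
    simp only [BellP]
    rw [← classical_id n m, one_div, inv_mul_cancel_left₀ hfac]
  | p + 2, _ =>
    show (Sp (p + 2) n m : ℝ) = (1 / m.factorial) * ∑ k ∈ range (m + 1),
        (m.choose k : ℝ) * (-1 : ℝ) ^ (m - k) * BellP (p + 1) n (k : ℝ)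
    have h2 : ∑ k ∈ range (m + 1),
          (m.choose k : ℝ) * (-1 : ℝ) ^ (m - k) * BellP (p + 1) n (k : ℝ)
        = (m.factorial : ℝ) * ∑ j ∈ range (n + 1), (Sp (p + 1) n j : ℝ) * (S2 j m : ℝ) := by
      calc ∑ k ∈ range (m + 1), (m.choose k : ℝ) * (-1 : ℝ) ^ (m - k) * BellP (p + 1) n (k : ℝ)
          = ∑ k ∈ range (m + 1), ∑ j ∈ range (n + 1),
              (Sp (p + 1) n j : ℝ) * ((m.choose k : ℝ) * (-1 : ℝ) ^ (m - k) * (k : ℝ) ^ j) := by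
            refine Finset.sum_congr rfl fun k hk => ?_
            show (m.choose k : ℝ) * (-1 : ℝ) ^ (m - k) *
                (∑ j ∈ range (n + 1), (Sp (p + 1) n j : ℝ) * (k : ℝ) ^ j) = _
            rw [Finset.mul_sum]
            exact Finset.sum_congr rfl fun j _ => by ring
        _ = ∑ j ∈ range (n + 1), ∑ k ∈ range (m + 1),
              (Sp (p + 1) n j : ℝ) * ((m.choose k : ℝ) * (-1 : ℝ) ^ (m - k) * (k : ℝ) ^ j) :=
            Finset.sum_comm
        _ = ∑ j ∈ range (n + 1), (Sp (p + 1) n j : ℝ) * ((m.factorial : ℝ) * (S2 j m : ℝ)) := by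
            refine Finset.sum_congr rfl fun j _ => ?_
            rw [← Finset.mul_sum, ← classical_id j m]
        _ = (m.factorial : ℝ) * ∑ j ∈ range (n + 1), (Sp (p + 1) n j : ℝ) * (S2 j m : ℝ) := by
            rw [Finset.mul_sum]
            exact Finset.sum_congr rfl fun j _ => by ring
    rw [h2, one_div, inv_mul_cancel_left₀ hfac]
    have h1 : Sp (p + 2) n m = ∑ k ∈ range (n + 1), Sp (p + 1) n k * S2 k m := by
      rw [show Sp (p + 2) n m = ∑ k ∈ range (n + 1), S2 n k * Sp (p + 1) k m from rfl,
        comm_lemma]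
    rw [h1]
    push_cast
    rfl
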